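/- arXiv:2102.05455 — 8 statements merged into one kernel-verified Lean document; each statement's English description precedes it below -/
import Mathlib

section
/- In every involutive Stone algebra, the operation defined by ¬x := ∼∇x (where ∼ is the De Morgan negation and ∇ the modal operator) satisfies the Stone identity: ¬x ∨ ¬¬x = ⊤. -/
/-- An involutive Stone algebra: a De Morgan algebra (bounded distributive
lattice with an involution `snot` satisfying the De Morgan laws) equipped
with a unary operation `nabla` satisfying (IS1)-(IS4). -/
class InvolutiveStone (α : Type*) extends DistribLattice α, BoundedOrder α where
  snot : α → α
  nabla : α → α
  snot_sup : ∀ x y : α, snot (x ⊔ y) = snot x ⊓ snot y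
  snot_snot : ∀ x : α, snot (snot x) = x
  snot_top : snot (⊤ : α) = ⊥
  nabla_bot : nabla (⊥ : α) = ⊥
  inf_nabla : ∀ x : α, x = x ⊓ nabla x
  nabla_inf : ∀ x y : α, nabla (x ⊓ y) = nabla x ⊓ nabla y
  snot_nabla_inf : ∀ x : α, snot (nabla x) ⊓ nabla x = ⊥

open InvolutiveStone

/-- the operation `¬x := ∼∇x` satisfies the Stone identity. -/
theorem stone_identity {α : Type*} [InvolutiveStone α] (x : α) :
    snot (nabla x) ⊔ snot (nabla (snot (nabla x))) = ⊤ := by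
  have hinj : Function.Injective (snot : α → α) :=
    Function.LeftInverse.injective snot_snot
  apply hinj
  rw [snot_top, snot_sup, snot_snot, snot_snot, ← nabla_inf]
  have hx : x ⊓ snot (nabla x) = ⊥ := by
    have h1 : x ⊓ snot (nabla x) = x ⊓ nabla x ⊓ snot (nabla x) := by
      rw [← inf_nabla]
    rw [h1, inf_assoc, inf_comm (nabla x), snot_nabla_inf, inf_bot_eq]
  rw [hx, nabla_bot]
end

section
/- In every involutive Stone algebra, the operation ¬x := ∼∇x is a pseudo-complement: for all a, b, a ∧ b = ⊥ if and only if a ≤ ¬b. -/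
open InvolutiveStone

/-- `¬x := ∼∇x` is a pseudo-complement. -/
theorem pseudo_complement {α : Type*} [InvolutiveStone α] (a b : α) :
    a ⊓ b = ⊥ ↔ a ≤ snot (nabla b) := by
  have snot_bot : snot (⊥ : α) = ⊤ := by
    rw [← snot_top (α := α), snot_snot]
  have snot_inf : ∀ x y : α, snot (x ⊓ y) = snot x ⊔ snot y := by
    intro x y
    rw [← snot_snot (snot x ⊔ snot y), snot_sup, snot_snot, snot_snot]
  have le_nabla : ∀ x : α, x ≤ nabla x := fun x => by
    conv_lhs => rw [inf_nabla x]
    exact inf_le_right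
  have compl : nabla b ⊔ snot (nabla b) = ⊤ := by
    rw [← snot_snot (nabla b ⊔ snot (nabla b)), snot_sup, snot_snot,
      snot_nabla_inf, snot_bot]
  constructor
  · intro h
    have h1 : a ⊓ nabla b = ⊥ := by
      apply le_antisymm _ bot_le
      calc a ⊓ nabla b ≤ nabla a ⊓ nabla b := inf_le_inf_right _ (le_nabla a)
        _ = nabla (a ⊓ b) := (nabla_inf a b).symm
        _ = ⊥ := by rw [h, nabla_bot]
    calc a = a ⊓ (nabla b ⊔ snot (nabla b)) := by rw [compl, inf_top_eq]
      _ = (a ⊓ nabla b) ⊔ (a ⊓ snot (nabla b)) := inf_sup_left _ _ _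
      _ = a ⊓ snot (nabla b) := by rw [h1, bot_sup_eq]
      _ ≤ snot (nabla b) := inf_le_right
  · intro h
    apply le_antisymm _ bot_le
    calc a ⊓ b ≤ snot (nabla b) ⊓ nabla b :=
          inf_le_inf h (le_nabla b)
      _ = ⊥ := snot_nabla_inf b
end

section
/- In every involutive Stone algebra, ∇(x ∨ y) = ∇x ∨ ∇y for all x, y. -/
open InvolutiveStone

section Aux
variable {α : Type*} [InvolutiveStone α]

lemma is_le_nabla (x : α) : x ≤ nabla x := by
  conv_lhs => rw [inf_nabla x]
  exact inf_le_right

lemma is_nabla_mono {x y : α} (h : x ≤ y) : nabla x ≤ (nabla y : α) := by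
  have : nabla (x ⊓ y) = nabla x ⊓ nabla y := nabla_inf x y
  rw [inf_eq_left.mpr h] at this
  rw [this]; exact inf_le_right

lemma is_snot_bot : snot (⊥ : α) = ⊤ := by
  rw [← snot_top, snot_snot]

lemma is_snot_inf (x y : α) : snot (x ⊓ y) = snot x ⊔ (snot y : α) := by
  conv_lhs => rw [← snot_snot x, ← snot_snot y, ← snot_sup, snot_snot]

lemma is_nabla_compl (x : α) : nabla x ⊔ snot (nabla x) = ⊤ := by
  have h := congrArg snot (snot_nabla_inf x)
  rwa [is_snot_inf, snot_snot, is_snot_bot] at h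

end Aux

/-- `∇` distributes over joins. -/
theorem nabla_sup {α : Type*} [InvolutiveStone α] (x y : α) :
    nabla (x ⊔ y) = nabla x ⊔ nabla y := by
  set c : α := snot (nabla x) ⊓ snot (nabla y) with hc
  have h1 : (x ⊔ y) ⊓ c = ⊥ := by
    rw [inf_sup_right]
    have hx : x ⊓ c ≤ ⊥ := by
      calc x ⊓ c ≤ nabla x ⊓ snot (nabla x) :=
            inf_le_inf (is_le_nabla x) (hc ▸ inf_le_left)
        _ = ⊥ := by rw [inf_comm]; exact snot_nabla_inf x
    have hy : y ⊓ c ≤ ⊥ := by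
      calc y ⊓ c ≤ nabla y ⊓ snot (nabla y) :=
            inf_le_inf (is_le_nabla y) (hc ▸ inf_le_right)
        _ = ⊥ := by rw [inf_comm]; exact snot_nabla_inf y
    exact le_bot_iff.mp (sup_le hx hy)
  have h2 : nabla (x ⊔ y) ⊓ c = ⊥ := by
    have : nabla (x ⊔ y) ⊓ c ≤ nabla (x ⊔ y) ⊓ nabla c :=
      inf_le_inf_left _ (is_le_nabla c)
    rw [← nabla_inf, h1, nabla_bot] at this
    exact le_bot_iff.mp this
  have h3 : c ⊔ (nabla x ⊔ nabla y) = ⊤ := by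
    rw [hc, sup_inf_right]
    have t1 : snot (nabla x) ⊔ (nabla x ⊔ nabla y) = ⊤ := by
      rw [← sup_assoc, sup_comm (snot (nabla x)) (nabla x), is_nabla_compl, top_sup_eq]
    have t2 : snot (nabla y) ⊔ (nabla x ⊔ nabla y) = ⊤ := by
      rw [sup_comm (nabla x) (nabla y), ← sup_assoc,
        sup_comm (snot (nabla y)) (nabla y), is_nabla_compl, top_sup_eq]
    rw [t1, t2, top_inf_eq]
  apply le_antisymm
  · calc nabla (x ⊔ y) = nabla (x ⊔ y) ⊓ (c ⊔ (nabla x ⊔ nabla y)) := by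
          rw [h3, inf_top_eq]
      _ = nabla (x ⊔ y) ⊓ c ⊔ nabla (x ⊔ y) ⊓ (nabla x ⊔ nabla y) := inf_sup_left _ _ _
      _ = nabla (x ⊔ y) ⊓ (nabla x ⊔ nabla y) := by rw [h2, bot_sup_eq]
      _ ≤ nabla x ⊔ nabla y := inf_le_right
  · exact sup_le (is_nabla_mono le_sup_left) (is_nabla_mono le_sup_right)
end

section
/- Let A be a De Morgan algebra. Define A^∇ on the set A ∪ {⊥̂, ⊤̂} (two fresh elements) by adjoining ⊥̂ as a new bottom and ⊤̂ as a new top to the lattice order of A, extending ∼ by ∼⊤̂ = ⊥̂ and ∼⊥̂ = ⊤̂, and defining ∇⊥̂ = ⊥̂ and ∇x = ⊤̂ for all x ≠ ⊥̂. Then A^∇ is an involutive Stone algebra. -/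
section
variable {α : Type*} [DistribLattice α] [BoundedOrder α]

/-- The extension of the De Morgan negation of `α` to `A^∇ = A ∪ {⊥̂, ⊤̂}`,
modelled as `WithBot (WithTop α)`: the two new extreme elements are swapped. -/
def extNot (neg : α → α) : WithBot (WithTop α) → WithBot (WithTop α)
  | none => some none                       -- ∼⊥̂ = ⊤̂
  | some none => none                       -- ∼⊤̂ = ⊥̂
  | some (some a) => some (some (neg a))

/-- The operation `∇` on `A^∇`: `∇⊥̂ = ⊥̂` and `∇x = ⊤̂` for `x ≠ ⊥̂`. -/
def extNabla : WithBot (WithTop α) → WithBot (WithTop α)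
  | none => none
  | some _ => some none

/-- for any De Morgan algebra `A`, the algebra `A^∇` obtained by
adjoining a new bottom and a new top, with the extended negation and the
operation `∇` above, is an involutive Stone algebra. -/
theorem extension_is_involutive_stone (neg : α → α)
    (hsup : ∀ x y : α, neg (x ⊔ y) = neg x ⊓ neg y)
    (hinv : ∀ x : α, neg (neg x) = x)
    (htop : neg (⊤ : α) = ⊥) :
    (∀ x y : WithBot (WithTop α),
        extNot neg (x ⊔ y) = extNot neg x ⊓ extNot neg y) ∧
    (∀ x : WithBot (WithTop α), extNot neg (extNot neg x) = x) ∧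
    (extNot neg (⊤ : WithBot (WithTop α)) = ⊥) ∧
    (extNabla (⊥ : WithBot (WithTop α)) = ⊥) ∧
    (∀ x : WithBot (WithTop α), x = x ⊓ extNabla x) ∧
    (∀ x y : WithBot (WithTop α), extNabla (x ⊓ y) = extNabla x ⊓ extNabla y) ∧
    (∀ x : WithBot (WithTop α), extNot neg (extNabla x) ⊓ extNabla x = ⊥) := by
  have e1 : extNot neg (⊥ : WithBot (WithTop α)) = ⊤ := rfl
  have e2 : extNot neg (⊤ : WithBot (WithTop α)) = ⊥ := rfl
  have e2' : extNot neg (((⊤ : WithTop α)) : WithBot (WithTop α)) = ⊥ := rfl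
  have e3 : ∀ a : α, extNot neg ((((a : WithTop α)) : WithBot (WithTop α)))
      = (((neg a : α) : WithTop α) : WithBot (WithTop α)) := fun _ => rfl
  have n1 : extNabla (⊥ : WithBot (WithTop α)) = ⊥ := rfl
  have n2 : extNabla (⊤ : WithBot (WithTop α)) = ⊤ := rfl
  have n3 : ∀ x : WithTop α, extNabla ((x : WithBot (WithTop α))) = ⊤ := fun _ => rfl
  have cs : ∀ x y : WithTop α, (x : WithBot (WithTop α)) ⊔ y = ((x ⊔ y : WithTop α)) :=
    fun x y => (WithBot.coe_sup x y).symm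
  have ci : ∀ x y : WithTop α, (x : WithBot (WithTop α)) ⊓ y = ((x ⊓ y : WithTop α)) :=
    fun x y => (WithBot.coe_inf x y).symm
  have cs' : ∀ a b : α, ((a : WithTop α) ⊔ (b : WithTop α)) = ((a ⊔ b : α) : WithTop α) :=
    fun a b => (WithTop.coe_sup a b).symm
  have ci' : ∀ a b : α, ((a : WithTop α) ⊓ (b : WithTop α)) = ((a ⊓ b : α) : WithTop α) :=
    fun a b => (WithTop.coe_inf a b).symm
  have K : ∀ P : WithBot (WithTop α) → Prop, P ⊥ → P ((⊤ : WithTop α) : WithBot (WithTop α)) →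
      (∀ a : α, P (((a : WithTop α)) : WithBot (WithTop α))) →
      ∀ x : WithBot (WithTop α), P x := by
    intro P h1 h2 h3 x
    induction x using WithBot.recBotCoe with
    | bot => exact h1
    | coe y => induction y using WithTop.recTopCoe with
      | top => exact h2
      | coe a => exact h3 a
  refine ⟨?_, ?_, e2, rfl, ?_, ?_, ?_⟩
  · intro x y
    induction x using K with
    | _ => induction y using K with
      | _ => simp [cs, cs', e1, e2, e2', e3, ci, ci', hsup, -WithBot.coe_sup, -WithBot.coe_inf, -WithTop.coe_sup, -WithTop.coe_inf]
  · intro x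
    induction x using K with
    | _ => simp [e1, e2, e2', e3, hinv]
  · intro x
    induction x using K with
    | _ => simp [n1, n2, n3]
  · intro x y
    induction x using K with
    | _ => induction y using K with
      | _ => simp [ci, ci', n1, n2, n3, -WithBot.coe_inf, -WithTop.coe_inf]
  · intro x
    induction x using K with
    | _ => simp [n1, n2, n3, e1, e2, e2', e3]

end
end

section
/- In the matrix ⟨IS₆, ↑1⟩ (designated set the principal up-set of 1, i.e., {1, ⊤̂}), the Leibniz congruence is the identity relation; that is, the matrix is reduced. -/
/-- The four-element De Morgan algebra `DM₄` (the diamond), modelled as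
`Bool × Bool`: `0 = (false, false)`, `1 = (true, true)`, `a = (false, true)`,
`b = (true, false)`. -/
abbrev DM4 := Bool × Bool

/-- The De Morgan negation of `DM₄`. -/
def dm4Not (p : DM4) : DM4 := (!p.2, !p.1)

/-- `IS₆`: `DM₄` with a new bottom `⊥̂` and a new top `⊤̂` adjoined. -/
abbrev IS6 := WithBot (WithTop DM4)

/-- The negation of `IS₆`. -/
def is6Not : IS6 → IS6
  | none => some none
  | some none => none
  | some (some p) => some (some (dm4Not p))

/-- The operation `∇` of `IS₆`: `∇⊥̂ = ⊥̂` and `∇x = ⊤̂` otherwise. -/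
def is6Nabla : IS6 → IS6
  | none => none
  | some _ => some none

/-- A congruence of `IS₆`: an equivalence relation compatible with all the
operations `⊓`, `⊔`, `∼`, `∇`. -/
def IS6Congr (r : IS6 → IS6 → Prop) : Prop :=
  Equivalence r ∧
  (∀ a b c d : IS6, r a b → r c d → r (a ⊓ c) (b ⊓ d)) ∧
  (∀ a b c d : IS6, r a b → r c d → r (a ⊔ c) (b ⊔ d)) ∧
  (∀ a b : IS6, r a b → r (is6Not a) (is6Not b)) ∧
  (∀ a b : IS6, r a b → r (is6Nabla a) (is6Nabla b))

/-- The relation `θ` on `IS₆` with classes `{⊥̂}`, `{0, a, b, 1}`, `{⊤̂}`. -/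
def is6Theta (x y : IS6) : Prop :=
  (x = ⊥ ∧ y = ⊥) ∨ (x = ⊤ ∧ y = ⊤) ∨
    (x ≠ ⊥ ∧ x ≠ ⊤ ∧ y ≠ ⊥ ∧ y ≠ ⊤)

/-- The designated set `↑1 = {1, ⊤̂}` of the matrix `⟨IS₆, ↑1⟩`. -/
def is6UpOne (x : IS6) : Prop :=
  x = some (some (true, true)) ∨ x = some none

lemma sup_mid (p q : DM4) : (some (some p) : IS6) ⊔ some (some q) = some (some (p ⊔ q)) := rfl

lemma sep (p q : DM4) (h : p ≠ q) : ∃ c : DM4,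
    (p ⊔ c = (true, true) ∧ q ⊔ c ≠ (true, true)) ∨
    (q ⊔ c = (true, true) ∧ p ⊔ c ≠ (true, true)) := by
  revert h; revert p q; decide

/-- the matrix `⟨IS₆, ↑1⟩` is reduced: every congruence of `IS₆`
compatible with `↑1` is the identity, so the Leibniz congruence is identity. -/
theorem IS6_up1_reduced :
    ∀ r : IS6 → IS6 → Prop, IS6Congr r →
      (∀ x y : IS6, r x y → is6UpOne x → is6UpOne y) →
      ∀ x y : IS6, r x y → x = y := by
  intro r ⟨heq, _, hsup, hnot, hnab⟩ hcompat
  -- anything related to ⊥ is ⊥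
  have hbot : ∀ y : IS6, r ⊥ y → y = ⊥ := by
    intro y hy
    by_contra hne
    have h1 : r (is6Nabla ⊥) (is6Nabla y) := hnab _ _ hy
    have h2 : is6Nabla (⊥ : IS6) = ⊥ := rfl
    have h3 : is6Nabla y = some none := by
      cases y with
      | none => exact absurd rfl hne
      | some z => rfl
    rw [h2, h3] at h1
    have h4 : is6UpOne (⊥ : IS6) := hcompat _ _ (heq.symm h1) (Or.inr rfl)
    rcases h4 with h | h <;> simp [show (⊥ : IS6) = none from rfl] at h
  have htop : ∀ y : IS6, r (some none) y → y = some none := by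
    intro y hy
    have h1 : r (is6Not (some none)) (is6Not y) := hnot _ _ hy
    have h2 := hbot _ h1
    cases y with
    | none => simp [is6Not, show (⊥ : IS6) = none from rfl] at h2
    | some z =>
      cases z with
      | top => rfl
      | coe p => simp [is6Not, show (⊥ : IS6) = none from rfl] at h2
  intro x y hxy
  cases x with
  | none => exact (hbot y hxy).symm
  | some z =>
    cases z with
    | top => exact (htop y hxy).symm
    | coe p =>
      -- y cannot be ⊥ or ⊤
      cases y with
      | none => exact absurd (hbot _ (heq.symm hxy)) (by simp [show (⊥:IS6)=none from rfl])
      | some w =>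
        cases w with
        | top => exact (by have h0 := Option.some.inj (htop _ (heq.symm hxy)); cases h0)
        | coe q =>
          by_contra hne
          have hpq : p ≠ q := by
            intro h; exact hne (by rw [h])
          obtain ⟨c, hc⟩ := sep p q hpq
          have hr : r (some (some p) ⊔ some (some c)) (some (some q) ⊔ some (some c)) :=
            hsup _ _ _ _ hxy (heq.refl _)
          have hr : r (some (some (p ⊔ c))) (some (some (q ⊔ c))) := hr
          rcases hc with ⟨h1, h2⟩ | ⟨h1, h2⟩
          · have := hcompat _ _ hr (by rw [h1]; exact Or.inl rfl)
            rcases this with h | h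
            · exact h2 (by injection (by injection h))
            · exact (by have h0 : (some (q ⊔ c) : WithTop DM4) = none := (by injection h); cases h0)
          · have := hcompat _ _ (heq.symm hr) (by rw [h1]; exact Or.inl rfl)
            rcases this with h | h
            · exact h2 (by injection (by injection h))
            · exact (by have h0 : (some (p ⊔ c) : WithTop DM4) = none := (by injection h); cases h0)
end

section
/- In the matrix ⟨IS₆, {⊤̂}⟩, the Leibniz congruence equals the congruence θ identifying {0, a, b, 1}; in particular this matrix is not reduced. -/
instance : Fintype (WithTop DM4) := inferInstanceAs (Fintype (Option DM4))
instance : Fintype IS6 := inferInstanceAs (Fintype (Option (WithTop DM4)))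

instance (x y : IS6) : Decidable (is6Theta x y) := by
  unfold is6Theta; infer_instance

/-- the Leibniz congruence of `⟨IS₆, {⊤̂}⟩` equals `θ`: `θ` is a
congruence compatible with `{⊤̂}`, every compatible congruence is contained in
`θ`, and `θ` is not the identity (so the matrix is not reduced). -/
theorem IS6_top_leibniz_eq_theta :
    IS6Congr is6Theta ∧
    (∀ x y : IS6, is6Theta x y → x = ⊤ → y = ⊤) ∧
    (∀ r : IS6 → IS6 → Prop, IS6Congr r →
      (∀ x y : IS6, r x y → x = ⊤ → y = ⊤) →
      ∀ x y : IS6, r x y → is6Theta x y) ∧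
    (∃ x y : IS6, is6Theta x y ∧ x ≠ y) := by

  refine ⟨⟨⟨?_, @?_, @?_⟩, ?_, ?_, ?_, ?_⟩, ?_, ?_, ?_⟩
  · decide
  · decide
  · decide
  · decide
  · decide
  · decide
  · decide
  · decide
  · rintro r ⟨⟨_, hsymm, _⟩, _, _, hnot, _⟩ hcomp x y hxy
    have hsy : r y x := hsymm hxy
    have key : ∀ u v : IS6, r u v → u = ⊥ → v = ⊥ := by
      rintro u v huv rfl
      have := hnot _ _ huv
      have h2 : is6Not v = ⊤ := hcomp _ _ this rfl
      revert h2
      exact (by decide : ∀ v : IS6, is6Not v = ⊤ → v = ⊥) v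
    unfold is6Theta
    by_cases hx : x = ⊥
    · exact Or.inl ⟨hx, key _ _ hxy hx⟩
    by_cases hx2 : x = ⊤
    · exact Or.inr (Or.inl ⟨hx2, hcomp _ _ hxy hx2⟩)
    refine Or.inr (Or.inr ⟨hx, hx2, ?_, ?_⟩)
    · intro hy; exact hx (key _ _ hsy hy)
    · intro hy; exact hx2 (hcomp _ _ hsy hy)
  · exact ⟨WithBot.some (WithTop.some (false,false)), WithBot.some (WithTop.some (true,true)), by decide, by decide⟩
end

section
/- The quotient of the matrix ⟨IS₆, {⊤̂}⟩ by its Leibniz congruence is isomorphic (as a matrix) to ⟨IS₃, {⊤̂}⟩, where IS₃ is the three-element subalgebra {⊥̂, 0≡1, ⊤̂} of the quotient. -/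
/-- `IS₃`: the three-element chain `⊥̂ < m < ⊤̂`. -/
abbrev IS3 := WithBot (WithTop Unit)

/-- The negation of `IS₃` (fixing the middle element). -/
def is3Not : IS3 → IS3
  | none => some none
  | some none => none
  | some (some u) => some (some u)

/-- The operation `∇` of `IS₃`. -/
def is3Nabla : IS3 → IS3
  | none => none
  | some _ => some none

instance inst_s14 : Fintype IS6 := Fintype.ofEquiv (Option (Option (Bool × Bool))) (Equiv.refl _)

/-- The quotient map from IS6 to IS3. -/
def qmap : IS6 → IS3
  | none => none
  | some none => some none
  | some (some _) => some (some ())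

set_option synthInstance.maxSize 1000 in
/-- the quotient of `⟨IS₆, {⊤̂}⟩` by its Leibniz congruence
(which is `θ`, identifying the four middle elements) is isomorphic to
`⟨IS₃, {⊤̂}⟩`: there is a surjective homomorphism `IS₆ → IS₃` whose kernel is
`θ` and which reflects the designated sets. -/
theorem IS6_top_quotient_iso_IS3 :
    ∃ h : IS6 → IS3, Function.Surjective h ∧
      (∀ x y : IS6, h (x ⊓ y) = h x ⊓ h y) ∧
      (∀ x y : IS6, h (x ⊔ y) = h x ⊔ h y) ∧
      (∀ x : IS6, h (is6Not x) = is3Not (h x)) ∧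
      (∀ x : IS6, h (is6Nabla x) = is3Nabla (h x)) ∧
      (∀ x y : IS6, h x = h y ↔ is6Theta x y) ∧
      (∀ x : IS6, h x = (⊤ : IS3) ↔ x = (⊤ : IS6)) := by
  refine ⟨qmap, ?_, ?_, ?_, ?_, ?_, ?_, ?_⟩
  · intro y; match y with
    | none => exact ⟨none, rfl⟩
    | some none => exact ⟨some none, rfl⟩
    | some (some u) => exact ⟨some (some (false,false)), rfl⟩
  · decide
  · decide
  · decide
  · decide
  · intro x y
    unfold is6Theta
    revert x y; decide
  · decide
end

section
/- The three-element algebra IS₃ is simple (has exactly two congruences), while the four-element algebra IS₄ (chain ⊥̂ < 0 < 1 < ⊤̂ with ∼ swapping ⊥̂/⊤̂ and 0/1, ∇⊥̂ = ⊥̂, ∇x = ⊤̂ otherwise) is not simple: the relation identifying 0 and 1 is a non-trivial proper congruence of IS₄. -/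
/-- A congruence of `IS₃`. -/
def IS3Congr (r : IS3 → IS3 → Prop) : Prop :=
  Equivalence r ∧
  (∀ a b c d : IS3, r a b → r c d → r (a ⊓ c) (b ⊓ d)) ∧
  (∀ a b c d : IS3, r a b → r c d → r (a ⊔ c) (b ⊔ d)) ∧
  (∀ a b : IS3, r a b → r (is3Not a) (is3Not b)) ∧
  (∀ a b : IS3, r a b → r (is3Nabla a) (is3Nabla b))

/-- `IS₄`: the four-element chain `⊥̂ < 0 < 1 < ⊤̂`, with
`0 = some (some false)` and `1 = some (some true)`. -/
abbrev IS4 := WithBot (WithTop Bool)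

/-- The negation of `IS₄`: it swaps `⊥̂`/`⊤̂` and `0`/`1`. -/
def is4Not : IS4 → IS4
  | none => some none
  | some none => none
  | some (some b) => some (some (!b))

/-- The operation `∇` of `IS₄`. -/
def is4Nabla : IS4 → IS4
  | none => none
  | some _ => some none

/-- A congruence of `IS₄`. -/
def IS4Congr (r : IS4 → IS4 → Prop) : Prop :=
  Equivalence r ∧
  (∀ a b c d : IS4, r a b → r c d → r (a ⊓ c) (b ⊓ d)) ∧
  (∀ a b c d : IS4, r a b → r c d → r (a ⊔ c) (b ⊔ d)) ∧
  (∀ a b : IS4, r a b → r (is4Not a) (is4Not b)) ∧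
  (∀ a b : IS4, r a b → r (is4Nabla a) (is4Nabla b))

/-- The relation on `IS₄` identifying exactly the two middle elements. -/
def is4Mid (x y : IS4) : Prop :=
  x = y ∨ ((x = some (some false) ∨ x = some (some true)) ∧
           (y = some (some false) ∨ y = some (some true)))

instance : Fintype IS4 := inferInstanceAs (Fintype (Option (Option Bool)))

instance (x y : IS4) : Decidable (is4Mid x y) := by
  unfold is4Mid
  exact @instDecidableOr _ _ (WithBot.decidableEq _ _) (@instDecidableAnd _ _
    (@instDecidableOr _ _ (WithBot.decidableEq _ _) (WithBot.decidableEq _ _))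
    (@instDecidableOr _ _ (WithBot.decidableEq _ _) (WithBot.decidableEq _ _)))

lemma is3_cases (a : IS3) : a = none ∨ a = some none ∨ a = some (some ()) := by
  rcases a with _ | (_ | _) <;> [exact Or.inl rfl; exact Or.inr (Or.inl rfl); exact Or.inr (Or.inr rfl)]

lemma is4Mid_symm : ∀ x y : IS4, is4Mid x y → is4Mid y x := by decide

lemma is4Mid_trans : ∀ x y z : IS4, is4Mid x y → is4Mid y z → is4Mid x z := by decide

lemma is4Mid_inf : ∀ a b c d : IS4, is4Mid a b → is4Mid c d → is4Mid (a ⊓ c) (b ⊓ d) := by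
  decide

lemma is4Mid_sup : ∀ a b c d : IS4, is4Mid a b → is4Mid c d → is4Mid (a ⊔ c) (b ⊔ d) := by
  decide

lemma is4Mid_not : ∀ a b : IS4, is4Mid a b → is4Mid (is4Not a) (is4Not b) := by decide

lemma is4Mid_nabla : ∀ a b : IS4, is4Mid a b → is4Mid (is4Nabla a) (is4Nabla b) := by decide

/-- `IS₃` is simple, while `IS₄` is not: identifying `0` and `1`
yields a non-trivial proper congruence of `IS₄`. -/
theorem IS3_simple_IS4_not_simple :
    (∀ r : IS3 → IS3 → Prop, IS3Congr r →
      (∀ x y, r x y ↔ x = y) ∨ (∀ x y, r x y)) ∧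
    (IS4Congr is4Mid ∧
      ¬ (∀ x y : IS4, is4Mid x y ↔ x = y) ∧
      ¬ (∀ x y : IS4, is4Mid x y)) := by
  constructor
  · intro r hr
    obtain ⟨heq, hinf, hsup, hnot, hnab⟩ := hr
    by_cases h : ∀ x y, r x y → x = y
    · exact Or.inl fun x y => ⟨h x y, fun e => e ▸ heq.refl x⟩
    · right
      push_neg at h
      obtain ⟨x, y, hxy, hne⟩ := h
      have hbt : r none (some none) := by
        rcases is3_cases x with hx | hx | hx <;> rcases is3_cases y with hy | hy | hy <;>
          subst hx <;> subst hy <;>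
          first
            | exact absurd rfl hne
            | exact hnab _ _ hxy
            | exact heq.symm (hnab _ _ hxy)
            | exact heq.symm (hnab _ _ (hnot _ _ hxy))
            | exact hnab _ _ (hnot _ _ hxy)
      have hbm : r none (some (some ())) := by
        have h1 := hinf none (some none) (some (some ())) (some (some ())) hbt
          (heq.refl _)
        exact h1
      have hall : ∀ u : IS3, r none u := by
        intro u
        rcases is3_cases u with hu | hu | hu <;> subst hu
        · exact heq.refl _
        · exact hbt
        · exact hbm
      exact fun u v => heq.trans (heq.symm (hall u)) (hall v)
  · refine ⟨⟨⟨fun x => Or.inl rfl, @fun x y h => is4Mid_symm x y h,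
      @fun x y z h h' => is4Mid_trans x y z h h'⟩,
      is4Mid_inf, is4Mid_sup, is4Mid_not, is4Mid_nabla⟩, ?_, ?_⟩
    · decide
    · decide
end
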